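/- For every n ≥ 2 and every t ≥ 1 there exists a finite constraint set 𝒢 = {g₀ = 1, g₁, …, g_s} ⊂ ℝ[x₁,…,xₙ] with each deg(g_i) ≥ t+1 for i ∈ [s], with 𝒢₊ compact and {−1,1}ⁿ ⊆ 𝒢₊, such that the generalized Motzkin polynomial M_n lies in the degree-(2n+2) Putinar-type SONC hierarchy H(𝕊𝕆ℕℂ, 𝒢, 2n+2) (indeed M_n is itself a nonnegative circuit polynomial), but M_n does not lie in the degree-t Schmüdgen-type SOS hierarchy H*(𝕊𝕆𝕊, 𝒢, t). In particular H(𝕊𝕆ℕℂ, 𝒢, 2n+2) ⊄ H*(𝕊𝕆𝕊, 𝒢, t). -/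

import Mathlib

open MvPolynomial Finset

noncomputable section

/-- The all-ones exponent vector `e = (1,…,1)`. -/
def eAll (n : ℕ) : Fin n →₀ ℕ := Finsupp.equivFunOnFinite.symm (fun _ => 1)

/-- The exponent vector `2(e + e_j)`. -/
def expMotz (n : ℕ) (j : Fin n) : Fin n →₀ ℕ :=
  Finsupp.equivFunOnFinite.symm (fun i => if i = j then 4 else 2)

/-- The exponent vector `2e = (2,…,2)`. -/
def twoE (n : ℕ) : Fin n →₀ ℕ := Finsupp.equivFunOnFinite.symm (fun _ => 2)

/-- The generalized Motzkin polynomial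
`M_n = 1 + Σ_{j=1}^n x^{2(e+e_j)} − (n+1)·x^{2e}`. -/
def Motzkin (n : ℕ) : MvPolynomial (Fin n) ℝ :=
  1 + (∑ j : Fin n, monomial (expMotz n j) (1 : ℝ)) - monomial (twoE n) ((n : ℝ) + 1)

/-- The signed quadric `N_n = (1 − Σ_{j=1}^n x_j)²`. -/
def SignedQuadric (n : ℕ) : MvPolynomial (Fin n) ℝ :=
  (1 - ∑ j : Fin n, X j) ^ 2

/-- `f` is a circuit polynomial. -/
def IsCircuit {n : ℕ} (f : MvPolynomial (Fin n) ℝ) : Prop :=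
  (∃ (w : Fin n →₀ ℕ) (c : ℝ), 0 ≤ c ∧ f = monomial (2 • w) c) ∨
  (∃ r : ℕ, r ≤ n ∧ ∃ (α : Fin (r + 1) → (Fin n →₀ ℕ)) (c : Fin (r + 1) → ℝ)
      (β : Fin n →₀ ℕ) (fβ : ℝ) (lam : Fin (r + 1) → ℝ),
    (∀ j, 0 < c j) ∧
    (∀ j i, Even (α j i)) ∧
    AffineIndependent ℝ (fun j => (fun i => (α j i : ℝ))) ∧
    (∀ j, 0 < lam j) ∧ (∑ j, lam j) = 1 ∧
    (∀ i, (β i : ℝ) = ∑ j, lam j * (α j i : ℝ)) ∧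
    f = monomial β fβ + ∑ j, monomial (α j) (c j))

/-- `f` is a nonnegative circuit polynomial. -/
def IsNonnegCircuit {n : ℕ} (f : MvPolynomial (Fin n) ℝ) : Prop :=
  IsCircuit f ∧ ∀ x : Fin n → ℝ, 0 ≤ eval x f

/-- The set of sums of nonnegative circuit polynomials. -/
def SONCset (n : ℕ) : Set (MvPolynomial (Fin n) ℝ) :=
  {f | ∃ (k : ℕ) (μ : Fin k → ℝ) (p : Fin k → MvPolynomial (Fin n) ℝ),
    (∀ i, 0 ≤ μ i) ∧ (∀ i, IsNonnegCircuit (p i)) ∧ f = ∑ i, μ i • p i}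

/-- The set of sums of squares. -/
def SOSset (n : ℕ) : Set (MvPolynomial (Fin n) ℝ) :=
  {f | ∃ (k : ℕ) (p : Fin k → MvPolynomial (Fin n) ℝ), f = ∑ i, (p i) ^ 2}

/-- The set of sums of squares of binomials (SDSOS). -/
def SDSOSset (n : ℕ) : Set (MvPolynomial (Fin n) ℝ) :=
  {f | ∃ (k : ℕ) (a b : Fin k → ℝ) (u v : Fin k → (Fin n →₀ ℕ)),
    f = ∑ i, (monomial (u i) (a i) + monomial (v i) (b i)) ^ 2}

/-- The Sherali-Adams set: nonnegative combinations of `x_I · x̄_J`. -/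
def SAset (n : ℕ) : Set (MvPolynomial (Fin n) ℝ) :=
  {f | ∃ α : Finset (Fin n) × Finset (Fin n) → ℝ, (∀ p, 0 ≤ α p) ∧
    f = ∑ p : Finset (Fin n) × Finset (Fin n),
      α p • ((∏ i ∈ p.1, X i) * ∏ j ∈ p.2, (1 - X j))}

/-- The preprime generated by a finite constraint set. -/
def preprime {n : ℕ} (G : Finset (MvPolynomial (Fin n) ℝ)) :
    Set (MvPolynomial (Fin n) ℝ) :=
  {p | ∃ (k : ℕ) (cc : Fin k → ℝ) (e : Fin k → MvPolynomial (Fin n) ℝ → ℕ),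
    (∀ i, 0 ≤ cc i) ∧ p = ∑ i, cc i • ∏ g ∈ G, g ^ (e i g)}

/-- The feasibility set `𝒢₊` of a constraint set. -/
def feasSet {n : ℕ} (G : Finset (MvPolynomial (Fin n) ℝ)) : Set (Fin n → ℝ) :=
  {x | ∀ g ∈ G, 0 ≤ eval x g}

/-- The Boolean hypercube `{0,1}ⁿ ⊆ ℝⁿ`. -/
def Hypercube (n : ℕ) : Set (Fin n → ℝ) := {x | ∀ i, x i = 0 ∨ x i = 1}

/-- The degree-`D` Putinar-type hierarchy `H(GEN, 𝒢, D)`. -/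
def HPut {n : ℕ} (GEN : Set (MvPolynomial (Fin n) ℝ))
    (G : Finset (MvPolynomial (Fin n) ℝ)) (D : ℕ) : Set (MvPolynomial (Fin n) ℝ) :=
  {f | ∃ (k : ℕ) (s g : Fin k → MvPolynomial (Fin n) ℝ),
    (∀ i, s i ∈ GEN) ∧ (∀ i, g i ∈ G) ∧
    (∀ i, (s i * g i).totalDegree ≤ D) ∧ f = ∑ i, s i * g i}

/-- The degree-`D` Schmüdgen-type hierarchy `H*(GEN, 𝒢, D)`. -/
def HSch {n : ℕ} (GEN : Set (MvPolynomial (Fin n) ℝ))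
    (G : Finset (MvPolynomial (Fin n) ℝ)) (D : ℕ) : Set (MvPolynomial (Fin n) ℝ) :=
  {f | ∃ (k : ℕ) (s g : Fin k → MvPolynomial (Fin n) ℝ),
    (∀ i, s i ∈ GEN) ∧ (∀ i, g i ∈ preprime G) ∧
    (∀ i, (s i * g i).totalDegree ≤ D) ∧ f = ∑ i, s i * g i}

/-- `bound(f, GEN, 𝒢, D)` for the Putinar-type hierarchy, valued in `EReal`. -/
def boundPut {n : ℕ} (f : MvPolynomial (Fin n) ℝ) (GEN : Set (MvPolynomial (Fin n) ℝ))
    (G : Finset (MvPolynomial (Fin n) ℝ)) (D : ℕ) : EReal :=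
  sSup {x : EReal | ∃ lam : ℝ, x = (lam : EReal) ∧ f - C lam ∈ HPut GEN G D}

/-- `boundSch(f, GEN, 𝒢, D)` for the Schmüdgen-type hierarchy, valued in `EReal`. -/
def boundSch {n : ℕ} (f : MvPolynomial (Fin n) ℝ) (GEN : Set (MvPolynomial (Fin n) ℝ))
    (G : Finset (MvPolynomial (Fin n) ℝ)) (D : ℕ) : EReal :=
  sSup {x : EReal | ∃ lam : ℝ, x = (lam : EReal) ∧ f - C lam ∈ HSch GEN G D}

/-- Putinar-type Sherali-Adams hierarchy with the SA degree convention
`deg p_i ≤ ⌊(D − deg g_i)/2⌋`, encoded as `2·deg p_i + deg g_i ≤ D`. -/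
def HPutSA {n : ℕ} (G : Finset (MvPolynomial (Fin n) ℝ)) (D : ℕ) :
    Set (MvPolynomial (Fin n) ℝ) :=
  {f | ∃ (k : ℕ) (p g : Fin k → MvPolynomial (Fin n) ℝ),
    (∀ i, p i ∈ SAset n) ∧ (∀ i, g i ∈ G) ∧
    (∀ i, 2 * (p i).totalDegree + (g i).totalDegree ≤ D) ∧ f = ∑ i, p i * g i}

/-- Schmüdgen-type Sherali-Adams hierarchy with the SA degree convention. -/
def HSchSA {n : ℕ} (G : Finset (MvPolynomial (Fin n) ℝ)) (D : ℕ) :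
    Set (MvPolynomial (Fin n) ℝ) :=
  {f | ∃ (k : ℕ) (p g : Fin k → MvPolynomial (Fin n) ℝ),
    (∀ i, p i ∈ SAset n) ∧ (∀ i, g i ∈ preprime G) ∧
    (∀ i, 2 * (p i).totalDegree + (g i).totalDegree ≤ D) ∧ f = ∑ i, p i * g i}

/-- `bound(f, 𝕊𝔸, 𝒢, D)`. -/
def boundPutSA {n : ℕ} (f : MvPolynomial (Fin n) ℝ)
    (G : Finset (MvPolynomial (Fin n) ℝ)) (D : ℕ) : EReal :=
  sSup {x : EReal | ∃ lam : ℝ, x = (lam : EReal) ∧ f - C lam ∈ HPutSA G D}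

/-- `boundSch(f, 𝕊𝔸, 𝒢, D)`. -/
def boundSchSA {n : ℕ} (f : MvPolynomial (Fin n) ℝ)
    (G : Finset (MvPolynomial (Fin n) ℝ)) (D : ℕ) : EReal :=
  sSup {x : EReal | ∃ lam : ℝ, x = (lam : EReal) ∧ f - C lam ∈ HSchSA G D}

end

noncomputable section SliceAux

abbrev MP (n : ℕ) := MvPolynomial (Fin n) ℝ

variable {n : ℕ}

/-- Integer-weighted degree of an exponent vector. -/
def lw (c : Fin n → ℤ) (α : Fin n →₀ ℕ) : ℤ := ∑ i, c i * (α i : ℤ)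

lemma lw_add (c : Fin n → ℤ) (a b : Fin n →₀ ℕ) : lw c (a + b) = lw c a + lw c b := by
  simp [lw, Finsupp.add_apply, mul_add, Finset.sum_add_distrib]

/-- The part of `p` of `lw`-weight exactly `W`. -/
def wslice (c : Fin n → ℤ) (W : ℤ) (p : MP n) : MP n :=
  ∑ α ∈ p.support.filter (fun α => lw c α = W), monomial α (coeff α p)

lemma coeff_slice (c : Fin n → ℤ) (W : ℤ) (p : MP n) (β : Fin n →₀ ℕ) :
    coeff β (wslice c W p) = if lw c β = W then coeff β p else 0 := by
  classical
  rw [wslice, coeff_sum]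
  rw [Finset.sum_congr rfl (fun α _ => coeff_monomial β α (coeff α p))]
  rw [Finset.sum_ite_eq' _ β (fun α => coeff α p)]
  by_cases h : lw c β = W
  · by_cases hs : β ∈ p.support
    · simp [Finset.mem_filter, h, hs]
    · rw [MvPolynomial.notMem_support_iff] at hs
      simp [Finset.mem_filter, h, hs]
  · simp [Finset.mem_filter, h]

lemma coeff_mul_slice {c : Fin n → ℤ} {W V : ℤ} {p q : MP n}
    (hp : ∀ α ∈ p.support, lw c α ≤ W) (hq : ∀ α ∈ q.support, lw c α ≤ V)
    {β : Fin n →₀ ℕ} (hβ : lw c β = W + V) :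
    coeff β (p * q) = coeff β (wslice c W p * wslice c V q) := by
  classical
  rw [MvPolynomial.coeff_mul, MvPolynomial.coeff_mul]
  refine Finset.sum_congr rfl fun ab hab => ?_
  rw [Finset.HasAntidiagonal.mem_antidiagonal] at hab
  have hadd : lw c ab.1 + lw c ab.2 = W + V := by rw [← lw_add, hab, hβ]
  rw [coeff_slice, coeff_slice]
  by_cases h1 : lw c ab.1 = W
  · have h2 : lw c ab.2 = V := by omega
    simp [h1, h2]
  · rw [if_neg h1, zero_mul]
    by_cases hpz : coeff ab.1 p = 0
    · rw [hpz, zero_mul]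
    · have ha := hp ab.1 (MvPolynomial.mem_support_iff.2 hpz)
      have hb : coeff ab.2 q = 0 := by
        by_contra hqz
        have := hq ab.2 (MvPolynomial.mem_support_iff.2 hqz)
        omega
      rw [hb, mul_zero]

lemma lw_eq_of_mem_support_slice_mul {c : Fin n → ℤ} {W V : ℤ} {p q : MP n}
    {β : Fin n →₀ ℕ} (hβ : β ∈ (wslice c W p * wslice c V q).support) :
    lw c β = W + V := by
  classical
  rw [MvPolynomial.mem_support_iff, MvPolynomial.coeff_mul] at hβ
  obtain ⟨ab, hab, hne⟩ := Finset.exists_ne_zero_of_sum_ne_zero hβ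
  rw [Finset.HasAntidiagonal.mem_antidiagonal] at hab
  rw [coeff_slice, coeff_slice] at hne
  by_cases h1 : lw c ab.1 = W
  · by_cases h2 : lw c ab.2 = V
    · rw [← hab, lw_add, h1, h2]
    · simp [h2] at hne
  · simp [h1] at hne

lemma slice_ne_zero_of_max {c : Fin n → ℤ} {p : MP n} {m : Fin n →₀ ℕ}
    (hm : m ∈ p.support) : wslice c (lw c m) p ≠ 0 := by
  intro hz
  have h := coeff_slice c (lw c m) p m
  rw [hz] at h
  simp only [MvPolynomial.coeff_zero, if_pos rfl] at h
  exact MvPolynomial.mem_support_iff.1 hm h.symm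

lemma sos_ne_zero {K : ℕ} {q : Fin K → MP n} {k₀ : Fin K} (h : q k₀ ≠ 0) :
    (∑ k, (q k) ^ 2) ≠ 0 := by
  intro hz
  obtain ⟨x, hx⟩ : ∃ x : Fin n → ℝ, eval x (q k₀) ≠ 0 := by
    by_contra hc
    push_neg at hc
    exact h (MvPolynomial.funext fun x => by simp [hc x])
  have h0 : eval x (∑ k, (q k) ^ 2) = 0 := by rw [hz]; simp
  rw [map_sum] at h0
  have hzz : ∀ k ∈ Finset.univ, (0:ℝ) ≤ eval x ((q k) ^ 2) := by
    intro k _; rw [map_pow]; positivity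
  have := (Finset.sum_eq_zero_iff_of_nonneg hzz).1 h0 k₀ (Finset.mem_univ _)
  rw [map_pow] at this
  exact hx (by nlinarith [this])

/-- Key lemma: exponents of summands of a SOS representation are controlled,
for every integer weight, by the support of the sum. -/
lemma sos_support_bound {K : ℕ} {f : MP n} {p : Fin K → MP n} (hf : f = ∑ k, (p k) ^ 2)
    (c : Fin n → ℤ) {k₀ : Fin K} {α₀ : Fin n →₀ ℕ} (hα₀ : α₀ ∈ (p k₀).support) :
    ∃ β ∈ f.support, 2 * lw c α₀ ≤ lw c β := by
  classical
  set A := Finset.univ.biUnion (fun k => (p k).support) with hA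
  have hαA : α₀ ∈ A := Finset.mem_biUnion.2 ⟨k₀, Finset.mem_univ _, hα₀⟩
  obtain ⟨m, hmA, hmax⟩ := A.exists_max_image (lw c) ⟨α₀, hαA⟩
  set W := lw c m with hW
  have hbound : ∀ k, ∀ α ∈ (p k).support, lw c α ≤ W := fun k α hα =>
    hmax α (Finset.mem_biUnion.2 ⟨k, Finset.mem_univ _, hα⟩)
  obtain ⟨k₁, _, hk₁⟩ := Finset.mem_biUnion.1 hmA
  set q := fun k => wslice c W (p k) with hq
  have hq1 : q k₁ ≠ 0 := slice_ne_zero_of_max hk₁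
  have hsum : (∑ k, (q k) ^ 2) ≠ 0 := sos_ne_zero hq1
  obtain ⟨β, hβ⟩ := Finset.nonempty_iff_ne_empty.2
    (fun hemp => hsum (MvPolynomial.support_eq_empty.1 hemp))
  have hβc : coeff β (∑ k, (q k) ^ 2) ≠ 0 := MvPolynomial.mem_support_iff.1 hβ
  -- lw of β
  have hlwβ : lw c β = W + W := by
    rw [MvPolynomial.coeff_sum] at hβc
    obtain ⟨k, _, hk⟩ := Finset.exists_ne_zero_of_sum_ne_zero hβc
    rw [sq] at hk
    exact lw_eq_of_mem_support_slice_mul (MvPolynomial.mem_support_iff.2 hk)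
  -- coeff transfer
  have hcoeff : coeff β f = coeff β (∑ k, (q k) ^ 2) := by
    rw [hf, MvPolynomial.coeff_sum, MvPolynomial.coeff_sum]
    refine Finset.sum_congr rfl fun k _ => ?_
    rw [sq, sq]
    exact coeff_mul_slice (hbound k) (hbound k) hlwβ
  refine ⟨β, MvPolynomial.mem_support_iff.2 (by rw [hcoeff]; exact hβc), ?_⟩
  have h1 : lw c α₀ ≤ W := hbound k₀ α₀ hα₀
  omega

end SliceAux

noncomputable section MotzkinFacts

open MvPolynomial Finset

variable {n : ℕ}

lemma expMotz_apply (j i : Fin n) : expMotz n j i = if i = j then 4 else 2 :=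
  congrFun (Finsupp.coe_equivFunOnFinite_symm _) _

lemma twoE_apply (i : Fin n) : twoE n i = 2 :=
  congrFun (Finsupp.coe_equivFunOnFinite_symm _) _

lemma eAll_apply (i : Fin n) : eAll n i = 1 :=
  congrFun (Finsupp.coe_equivFunOnFinite_symm _) _

lemma twoE_ne_zero (hn : 1 ≤ n) : twoE n ≠ 0 := by
  intro h
  have := congrArg (fun f => f ⟨0, hn⟩) h
  simp [twoE_apply] at this

lemma expMotz_ne_twoE (j : Fin n) : expMotz n j ≠ twoE n := by
  intro h
  have := congrArg (fun f => f j) h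
  simp [twoE_apply, expMotz_apply] at this

lemma coeff_motzkin_twoE (hn : 1 ≤ n) : coeff (twoE n) (Motzkin n) = -((n : ℝ) + 1) := by
  classical
  rw [Motzkin, sub_eq_add_neg, coeff_add, coeff_add, coeff_neg, coeff_sum]
  rw [MvPolynomial.coeff_one, if_neg (fun h => twoE_ne_zero hn h.symm)]
  rw [Finset.sum_eq_zero (fun j _ => by
    rw [coeff_monomial, if_neg (expMotz_ne_twoE j)]), coeff_monomial, if_pos rfl]
  ring

lemma motzkin_support (hn : 1 ≤ n) {β : Fin n →₀ ℕ} (hβ : β ∈ (Motzkin n).support) :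
    β = 0 ∨ β = twoE n ∨ ∃ j, β = expMotz n j := by
  classical
  by_contra hc
  push_neg at hc
  obtain ⟨h0, h2, hj⟩ := hc
  apply MvPolynomial.mem_support_iff.1 hβ
  rw [Motzkin, sub_eq_add_neg, coeff_add, coeff_add, coeff_neg, coeff_sum]
  rw [MvPolynomial.coeff_one, if_neg (fun h => h0 h.symm)]
  rw [Finset.sum_eq_zero (fun j _ => by
    rw [coeff_monomial, if_neg (fun h => hj j h.symm)]), coeff_monomial,
    if_neg (fun h => h2 h.symm)]
  ring

lemma lw_ones (α : Fin n →₀ ℕ) : lw (fun _ => 1) α = ∑ i, (α i : ℤ) := by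
  simp [lw]

lemma sum_ite42 (j : Fin n) : (∑ i : Fin n, (if i = j then (4:ℤ) else 2)) = 2 * n + 2 := by
  classical
  have h : ∀ i : Fin n, (if i = j then (4:ℤ) else 2) = 2 + (if i = j then 2 else 0) := by
    intro i; split <;> ring
  rw [Finset.sum_congr rfl (fun i _ => h i), Finset.sum_add_distrib,
    Finset.sum_ite_eq' _ j (fun _ => (2:ℤ))]
  simp [mul_comm]

lemma sum_cast_twoE : (∑ i : Fin n, (twoE n i : ℤ)) = 2 * n := by
  have h : ∀ i : Fin n, ((twoE n i : ℤ)) = 2 := fun i => by rw [twoE_apply]; norm_num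
  rw [Finset.sum_congr rfl fun i _ => h i, Finset.sum_const, card_univ, Fintype.card_fin,
    nsmul_eq_mul]
  ring

lemma sum_cast_expMotz (j : Fin n) : (∑ i : Fin n, (expMotz n j i : ℤ)) = 2 * n + 2 := by
  have h : ∀ i : Fin n, ((expMotz n j i : ℤ)) = if i = j then (4:ℤ) else 2 := fun i => by
    rw [expMotz_apply]; split <;> norm_num
  rw [Finset.sum_congr rfl fun i _ => h i]
  exact sum_ite42 j

lemma lw_ones_motzkin (hn : 1 ≤ n) {β : Fin n →₀ ℕ} (hβ : β ∈ (Motzkin n).support) :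
    lw (fun _ => 1) β ≤ 2 * n + 2 := by
  rcases motzkin_support hn hβ with h | h | ⟨j, h⟩ <;> subst h <;> rw [lw_ones]
  · simp
    positivity
  · rw [sum_cast_twoE]; omega
  · rw [sum_cast_expMotz]

/-- The facet weight: `c_j i = 1 - (n+1)·[i = j]`. -/
def facetW (n : ℕ) (j : Fin n) : Fin n → ℤ := fun i => if i = j then 1 - (n + 1 : ℤ) else 1

lemma lw_facetW (j : Fin n) (α : Fin n →₀ ℕ) :
    lw (facetW n j) α = (∑ i, (α i : ℤ)) - (n + 1) * (α j : ℤ) := by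
  classical
  have h : ∀ i : Fin n, facetW n j i * (α i : ℤ)
      = (α i : ℤ) + (if i = j then -((n:ℤ) + 1) * (α i : ℤ) else 0) := by
    intro i; rw [facetW]; split <;> ring
  rw [lw, Finset.sum_congr rfl (fun i _ => h i), Finset.sum_add_distrib,
    Finset.sum_ite_eq' _ j (fun i => -((n:ℤ) + 1) * (α i : ℤ))]
  simp; ring

lemma lw_facetW_motzkin (hn : 1 ≤ n) (j : Fin n) {β : Fin n →₀ ℕ}
    (hβ : β ∈ (Motzkin n).support) : lw (facetW n j) β ≤ 0 := by
  classical
  rcases motzkin_support hn hβ with h | h | ⟨j', h⟩ <;> subst h <;> rw [lw_facetW]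
  · simp
  · rw [sum_cast_twoE]
    have : (twoE n j : ℤ) = 2 := by rw [twoE_apply]; norm_num
    rw [this]; omega
  · rw [sum_cast_expMotz]
    have : (expMotz n j' j : ℤ) = if j = j' then (4:ℤ) else 2 := by
      rw [expMotz_apply]; split <;> norm_num
    rw [this]
    by_cases hjj : j = j'
    · rw [if_pos hjj]; omega
    · rw [if_neg hjj]; omega

theorem motzkin_ne_sos (hn : 2 ≤ n) {K : ℕ} (p : Fin K → MP n) :
    Motzkin n ≠ ∑ k, (p k) ^ 2 := by
  classical
  intro hf
  have hn1 : 1 ≤ n := by omega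
  have key1 : ∀ k, ∀ α ∈ (p k).support, (∑ i, (α i : ℤ)) ≤ n + 1 := by
    intro k α hα
    obtain ⟨β, hβ, hle⟩ := sos_support_bound hf (fun _ => 1) hα
    have := lw_ones_motzkin hn1 hβ
    rw [lw_ones] at hle
    omega
  have key2 : ∀ (j : Fin n) k, ∀ α ∈ (p k).support,
      (∑ i, (α i : ℤ)) ≤ (n + 1) * (α j : ℤ) := by
    intro j k α hα
    obtain ⟨β, hβ, hle⟩ := sos_support_bound hf (facetW n j) hα
    have := lw_facetW_motzkin hn1 j hβ
    rw [lw_facetW] at hle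
    omega
  have hEE : eAll n + eAll n = twoE n := by
    ext i; simp [eAll_apply, twoE_apply]
  have hk : ∀ k, coeff (twoE n) ((p k) ^ 2) = (coeff (eAll n) (p k)) ^ 2 := by
    intro k
    rw [sq, MvPolynomial.coeff_mul]
    rw [Finset.sum_eq_single (eAll n, eAll n)]
    · rw [sq]
    · intro ab hab hne
      by_contra hz
      have h1 : ab.1 ∈ (p k).support :=
        MvPolynomial.mem_support_iff.2 (left_ne_zero_of_mul hz)
      have h2 : ab.2 ∈ (p k).support :=
        MvPolynomial.mem_support_iff.2 (right_ne_zero_of_mul hz)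
      have hsum : ab.1 + ab.2 = twoE n := Finset.HasAntidiagonal.mem_antidiagonal.1 hab
      have hco : ∀ i, (ab.1 i : ℤ) + (ab.2 i : ℤ) = 2 := by
        intro i
        have := congrArg (fun f => f i) hsum
        simp only [Finsupp.add_apply, twoE_apply] at this
        exact_mod_cast this
      have hsa := key1 k ab.1 h1
      have hsb := key1 k ab.2 h2
      have hsab : (∑ i, (ab.1 i : ℤ)) + (∑ i, (ab.2 i : ℤ)) = 2 * n := by
        rw [← Finset.sum_add_distrib, Finset.sum_congr rfl (fun i _ => hco i),
          Finset.sum_const, card_univ, Fintype.card_fin, nsmul_eq_mul]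
        ring
      have hn' : (2:ℤ) ≤ (n:ℤ) := by exact_mod_cast hn
      have hone : ∀ j : Fin n, ab.1 j = 1 ∧ ab.2 j = 1 := by
        intro j
        have ha := key2 j k ab.1 h1
        have hb := key2 j k ab.2 h2
        have ha1 : 1 ≤ ab.1 j := by
          rcases Nat.eq_zero_or_pos (ab.1 j) with h0 | h0
          · rw [h0] at ha; norm_num at ha; omega
          · exact h0
        have hb1 : 1 ≤ ab.2 j := by
          rcases Nat.eq_zero_or_pos (ab.2 j) with h0 | h0
          · rw [h0] at hb; norm_num at hb; omega
          · exact h0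
        have := hco j
        omega
      apply hne
      have hab1 : ab.1 = eAll n := by
        ext i; rw [eAll_apply]; exact (hone i).1
      have hab2 : ab.2 = eAll n := by
        ext i; rw [eAll_apply]; exact (hone i).2
      exact Prod.ext hab1 hab2
    · intro hnm
      exact absurd (Finset.HasAntidiagonal.mem_antidiagonal.2 hEE) hnm
  have hpos : (0:ℝ) ≤ coeff (twoE n) (Motzkin n) := by
    rw [hf, MvPolynomial.coeff_sum]
    exact Finset.sum_nonneg (fun k _ => by rw [hk k]; positivity)
  rw [coeff_motzkin_twoE hn1] at hpos
  have : (0:ℝ) ≤ (n:ℝ) := by positivity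
  linarith

end MotzkinFacts

noncomputable section MainAux

open MvPolynomial Finset

variable {n t : ℕ}

lemma sum_cast_fin (α : Fin n →₀ ℕ) : ((α.sum fun _ e => e : ℕ) : ℤ) = lw (fun _ => 1) α := by
  rw [Finsupp.sum_fintype _ _ (fun i => rfl), lw_ones]
  push_cast
  rfl

lemma totalDegree_le_mul {s h : MP n} (hs : s ≠ 0) (hh : h ≠ 0) :
    h.totalDegree ≤ (s * h).totalDegree := by
  classical
  have hsn : s.support.Nonempty := Finset.nonempty_iff_ne_empty.2
    (fun he => hs (MvPolynomial.support_eq_empty.1 he))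
  have hhn : h.support.Nonempty := Finset.nonempty_iff_ne_empty.2
    (fun he => hh (MvPolynomial.support_eq_empty.1 he))
  obtain ⟨ms, hms, hmaxs⟩ := s.support.exists_max_image (lw (fun _ => 1)) hsn
  obtain ⟨mh, hmh, hmaxh⟩ := h.support.exists_max_image (lw (fun _ => 1)) hhn
  have hP : wslice (fun _ => 1) (lw (fun _ => 1) ms) s
      * wslice (fun _ => 1) (lw (fun _ => 1) mh) h ≠ 0 :=
    mul_ne_zero (slice_ne_zero_of_max hms) (slice_ne_zero_of_max hmh)
  obtain ⟨β, hβ⟩ := Finset.nonempty_iff_ne_empty.2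
    (fun he => hP (MvPolynomial.support_eq_empty.1 he))
  have hlwβ : lw (fun _ => 1) β = lw (fun _ => 1) ms + lw (fun _ => 1) mh :=
    lw_eq_of_mem_support_slice_mul hβ
  have hco : coeff β (s * h) ≠ 0 := by
    rw [coeff_mul_slice hmaxs hmaxh hlwβ]
    exact MvPolynomial.mem_support_iff.1 hβ
  have hWs : (0:ℤ) ≤ lw (fun _ => 1) ms := by
    rw [lw_ones]; exact Finset.sum_nonneg fun i _ => Int.natCast_nonneg _
  have hb : ∀ α ∈ h.support, (α.sum fun _ e => e) ≤ (β.sum fun _ e => e) := by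
    intro α hα
    have h1 : lw (fun _ => 1) α ≤ lw (fun _ => 1) mh := hmaxh α hα
    have h2 := sum_cast_fin α
    have h3 := sum_cast_fin β
    omega
  calc h.totalDegree ≤ (β.sum fun _ e => e) := Finset.sup_le hb
    _ ≤ (s * h).totalDegree := MvPolynomial.le_totalDegree (MvPolynomial.mem_support_iff.2 hco)

/-- evaluation substituting every variable by the univariate `X`. -/
def phiU (n : ℕ) : MvPolynomial (Fin n) ℝ →ₐ[ℝ] Polynomial ℝ :=
  MvPolynomial.aeval (fun _ => Polynomial.X)

lemma natDegree_phiU_le (h : MP n) : (phiU n h).natDegree ≤ h.totalDegree := by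
  classical
  conv_lhs => rw [h.as_sum]
  rw [map_sum]
  apply Polynomial.natDegree_sum_le_of_forall_le
  intro α hα
  rw [phiU, MvPolynomial.aeval_monomial]
  have hprod : (α.prod fun _ k => (Polynomial.X : Polynomial ℝ) ^ k)
      = Polynomial.X ^ (α.sum fun _ e => e) := by
    rw [Finsupp.prod_fintype _ _ (fun i => pow_zero _), Finsupp.sum_fintype _ _ (fun i => rfl)]
    exact Finset.prod_pow_eq_pow_sum _ _ _
  rw [hprod, Polynomial.algebraMap_eq]
  refine le_trans (Polynomial.natDegree_C_mul_le _ _) ?_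
  rw [Polynomial.natDegree_X_pow]
  exact MvPolynomial.le_totalDegree hα

/-- The high-degree compactness constraint. -/
def ggP (n t : ℕ) : MP n := MvPolynomial.C ((n:ℝ)+1) - ∑ i : Fin n, (MvPolynomial.X i)^(2*t)

lemma eval_ggP (x : Fin n → ℝ) : eval x (ggP n t) = ((n:ℝ)+1) - ∑ i, (x i)^(2*t) := by
  simp [ggP]

lemma phiU_ggP : phiU n (ggP n t)
    = Polynomial.C ((n:ℝ)+1) - Polynomial.C (n:ℝ) * Polynomial.X^(2*t) := by
  rw [ggP, map_sub, map_sum]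
  congr 1
  · rw [phiU]; rw [MvPolynomial.aeval_C]; rw [Polynomial.algebraMap_eq]
  · rw [Finset.sum_congr rfl (fun i _ => by rw [map_pow, phiU, MvPolynomial.aeval_X] :
      ∀ i ∈ univ, phiU n ((MvPolynomial.X i : MP n)^(2*t)) = Polynomial.X ^ (2*t))]
    rw [Finset.sum_const, card_univ, Fintype.card_fin, nsmul_eq_mul]
    rw [← Polynomial.C_eq_natCast]

lemma coeff_ggP_single (hn : 1 ≤ n) (ht : 1 ≤ t) :
    coeff (Finsupp.single (⟨0, hn⟩ : Fin n) (2*t)) (ggP n t) = -1 := by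
  classical
  have h2t : (2*t : ℕ) ≠ 0 := by omega
  have hsne : (Finsupp.single (⟨0, hn⟩ : Fin n) (2*t)) ≠ 0 := by
    rw [Ne, Finsupp.single_eq_zero]; exact h2t
  rw [ggP, MvPolynomial.coeff_sub, MvPolynomial.coeff_C,
    if_neg (fun h => hsne h.symm), MvPolynomial.coeff_sum]
  have hterm : ∀ i : Fin n,
      coeff (Finsupp.single (⟨0, hn⟩ : Fin n) (2*t)) ((MvPolynomial.X i : MP n)^(2*t))
        = if i = (⟨0, hn⟩ : Fin n) then (1:ℝ) else 0 := by
    intro i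
    rw [MvPolynomial.X_pow_eq_monomial, coeff_monomial,
      if_congr (Finsupp.single_left_inj h2t) rfl rfl]
  rw [Finset.sum_congr rfl (fun i _ => hterm i),
    Finset.sum_ite_eq' _ _ (fun _ => (1:ℝ)), if_pos (Finset.mem_univ _)]
  ring

lemma le_totalDegree_ggP (hn : 1 ≤ n) (ht : 1 ≤ t) : 2*t ≤ (ggP n t).totalDegree := by
  have h := coeff_ggP_single hn ht
  have hmem : Finsupp.single (⟨0, hn⟩ : Fin n) (2*t) ∈ (ggP n t).support :=
    MvPolynomial.mem_support_iff.2 (by rw [h]; norm_num)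
  have := MvPolynomial.le_totalDegree hmem
  rwa [Finsupp.sum_single_index rfl] at this

lemma ggP_ne_one (hn : 1 ≤ n) (ht : 1 ≤ t) : ggP n t ≠ (1 : MP n) := by
  intro h
  have h1 := le_totalDegree_ggP hn ht
  rw [h, MvPolynomial.totalDegree_one] at h1
  omega

lemma preprime_comb_const (hn : 1 ≤ n) (ht : 1 ≤ t) {k : ℕ}
    (cc : Fin k → ℝ) (b : Fin k → ℕ) (hcc : ∀ m, 0 ≤ cc m)
    (hdeg : (∑ m, cc m • (ggP n t)^(b m)).totalDegree ≤ t) :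
    ∃ c : ℝ, 0 ≤ c ∧ (∑ m, cc m • (ggP n t)^(b m)) = MvPolynomial.C c := by
  classical
  by_cases hex : ∃ m, cc m ≠ 0 ∧ b m ≠ 0
  · exfalso
    obtain ⟨m₁, hm₁cc, hm₁b⟩ := hex
    set S := univ.filter (fun m : Fin k => cc m ≠ 0) with hS
    have hm₁S : m₁ ∈ S := by simp [hS, hm₁cc]
    obtain ⟨ms, hmsS, hmax⟩ := S.exists_max_image b ⟨m₁, hm₁S⟩
    set B := b ms with hB
    have hB1 : 1 ≤ B := le_trans (by omega) (hmax m₁ hm₁S)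
    set q : Polynomial ℝ := Polynomial.C ((n:ℝ)+1) - Polynomial.C (n:ℝ) * Polynomial.X^(2*t)
      with hq
    have hn0 : (n:ℝ) ≠ 0 := by
      have : (1:ℝ) ≤ (n:ℝ) := by exact_mod_cast hn
      linarith
    have hqco : q.coeff (2*t) = -(n:ℝ) := by
      rw [hq, Polynomial.coeff_sub, Polynomial.coeff_C, if_neg (by omega),
        Polynomial.coeff_C_mul, Polynomial.coeff_X_pow, if_pos rfl]
      ring
    have hqdeg : q.natDegree = 2*t := by
      refine le_antisymm ?_ ?_
      · refine le_trans (Polynomial.natDegree_sub_le _ _) ?_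
        rw [max_le_iff]
        refine ⟨by rw [Polynomial.natDegree_C]; omega, ?_⟩
        refine le_trans (Polynomial.natDegree_C_mul_le _ _) ?_
        rw [Polynomial.natDegree_X_pow]
      · exact Polynomial.le_natDegree_of_ne_zero (by rw [hqco]; simpa using hn0)
    have hqlead : q.leadingCoeff = -(n:ℝ) := by
      rw [Polynomial.leadingCoeff, hqdeg, hqco]
    have hphih : phiU n (∑ m, cc m • (ggP n t)^(b m)) = ∑ m, cc m • q ^ (b m) := by
      rw [map_sum]
      refine Finset.sum_congr rfl fun m _ => ?_
      rw [map_smul, map_pow, phiU_ggP, hq]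
    have hclt : ∀ m, b m < B → (q ^ (b m)).coeff (2*t*B) = 0 := by
      intro m hm
      apply Polynomial.coeff_eq_zero_of_natDegree_lt
      refine lt_of_le_of_lt Polynomial.natDegree_pow_le ?_
      rw [hqdeg]
      calc b m * (2*t) < B * (2*t) := by
            exact (Nat.mul_lt_mul_right (by omega : 0 < 2*t)).2 hm
        _ = 2*t*B := by ring
    have hcB : (q ^ B).coeff (2*t*B) = (-(n:ℝ))^B := by
      have hnd : (q ^ B).natDegree = 2*t*B := by
        rw [Polynomial.natDegree_pow, hqdeg]; ring
      rw [← hnd, Polynomial.coeff_natDegree, Polynomial.leadingCoeff_pow, hqlead]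
    have hval : (phiU n (∑ m, cc m • (ggP n t)^(b m))).coeff (2*t*B)
        = (∑ m, if b m = B then cc m else 0) * (-(n:ℝ))^B := by
      have hterm : ∀ m : Fin k, (cc m • q ^ (b m)).coeff (2*t*B)
          = (if b m = B then cc m else 0) * (-(n:ℝ))^B := by
        intro m
        rw [Polynomial.coeff_smul, smul_eq_mul]
        rcases lt_trichotomy (b m) B with hlt | heq | hgt
        · rw [hclt m hlt, if_neg (by omega), mul_zero, zero_mul]
        · rw [heq, hcB, if_pos rfl]
        · have hm0 : cc m = 0 := by
            by_contra hne
            have hmS : m ∈ S := by simp [hS, hne]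
            have := hmax m hmS
            omega
          rw [hm0, zero_mul]
          rw [if_neg (by omega), zero_mul]
      rw [hphih, Polynomial.finset_sum_coeff,
        Finset.sum_congr rfl (fun m _ => hterm m), ← Finset.sum_mul]
    have hpos : (0:ℝ) < ∑ m, if b m = B then cc m else 0 := by
      have hnn : ∀ m ∈ univ, (0:ℝ) ≤ (fun m => if b m = B then cc m else 0) m := by
        intro m _
        dsimp only
        split
        exacts [hcc m, le_refl 0]
      have hle := Finset.single_le_sum hnn (Finset.mem_univ ms)
      rw [if_pos (show b ms = B from hB.symm)] at hle
      have hmscc : cc ms ≠ 0 := by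
        have h' := hmsS
        rw [hS, Finset.mem_filter] at h'
        exact h'.2
      have := lt_of_le_of_ne (hcc ms) (Ne.symm hmscc)
      linarith
    have hne : (phiU n (∑ m, cc m • (ggP n t)^(b m))).coeff (2*t*B) ≠ 0 := by
      rw [hval]
      exact mul_ne_zero (ne_of_gt hpos) (pow_ne_zero _ (by simpa using hn0))
    have h1 : 2*t*B ≤ (phiU n (∑ m, cc m • (ggP n t)^(b m))).natDegree :=
      Polynomial.le_natDegree_of_ne_zero hne
    have h2 := natDegree_phiU_le (∑ m, cc m • (ggP n t)^(b m))
    have h3 : 2*t ≤ 2*t*B := Nat.le_mul_of_pos_right _ (by omega)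
    omega
  · push_neg at hex
    refine ⟨∑ m, if b m = 0 then cc m else 0, ?_, ?_⟩
    · apply Finset.sum_nonneg
      intro m _
      split
      exacts [hcc m, le_refl 0]
    · rw [map_sum]
      refine Finset.sum_congr rfl fun m _ => ?_
      by_cases hbm : b m = 0
      · rw [if_pos hbm, hbm, pow_zero, MvPolynomial.smul_eq_C_mul, mul_one]
      · have hcc0 : cc m = 0 := by
          by_contra hc
          exact hbm (hex m hc)
        rw [if_neg hbm, hcc0, zero_smul, map_zero]

lemma sos_zero : (0 : MP n) ∈ SOSset n := ⟨0, fun i => 0, by simp⟩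

lemma sos_add {f g : MP n} (hf : f ∈ SOSset n) (hg : g ∈ SOSset n) : f + g ∈ SOSset n := by
  obtain ⟨k1, p, hp⟩ := hf
  obtain ⟨k2, q, hq⟩ := hg
  refine ⟨k1 + k2, Fin.append p q, ?_⟩
  rw [Fin.sum_univ_add]
  simp only [Fin.append_left, Fin.append_right]
  rw [hp, hq]

lemma sos_smulC {f : MP n} (c : ℝ) (hc : 0 ≤ c) (hf : f ∈ SOSset n) :
    MvPolynomial.C c * f ∈ SOSset n := by
  obtain ⟨k, p, hp⟩ := hf
  refine ⟨k, fun i => MvPolynomial.C (Real.sqrt c) * p i, ?_⟩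
  rw [hp, Finset.mul_sum]
  refine Finset.sum_congr rfl fun i _ => ?_
  rw [mul_pow, ← map_pow, Real.sq_sqrt hc]

end MainAux

noncomputable section PartD

open MvPolynomial Finset

variable {n t : ℕ}

lemma sum_ite42n (j : Fin n) : (∑ i : Fin n, expMotz n j i) = 2 * n + 2 := by
  classical
  have h : ∀ i : Fin n, expMotz n j i = 2 + (if i = j then 2 else 0) := by
    intro i; rw [expMotz_apply]; split <;> rfl
  rw [Finset.sum_congr rfl (fun i _ => h i), Finset.sum_add_distrib,
    Finset.sum_ite_eq' _ j (fun _ => (2:ℕ)), Finset.sum_const, card_univ, Fintype.card_fin,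
    if_pos (Finset.mem_univ j), smul_eq_mul]
  omega

lemma sum_twoEn : (∑ i : Fin n, twoE n i) = 2 * n := by
  rw [Finset.sum_congr rfl (fun i _ => twoE_apply i), Finset.sum_const, card_univ,
    Fintype.card_fin, smul_eq_mul]
  omega

lemma motzkin_totalDegree_le : (Motzkin n).totalDegree ≤ 2*n + 2 := by
  rw [Motzkin, sub_eq_add_neg]
  refine le_trans (MvPolynomial.totalDegree_add _ _) ?_
  rw [max_le_iff]
  constructor
  · refine le_trans (MvPolynomial.totalDegree_add _ _) ?_
    rw [max_le_iff]
    constructor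
    · rw [MvPolynomial.totalDegree_one]; omega
    · refine le_trans (MvPolynomial.totalDegree_finset_sum _ _) ?_
      refine Finset.sup_le fun j _ => ?_
      rw [MvPolynomial.totalDegree_monomial _ one_ne_zero,
        Finsupp.sum_fintype _ _ (fun i => rfl), sum_ite42n]
  · rw [MvPolynomial.totalDegree_neg]
    have hne : ((n:ℝ) + 1) ≠ 0 := by positivity
    rw [MvPolynomial.totalDegree_monomial _ hne, Finsupp.sum_fintype _ _ (fun i => rfl),
      sum_twoEn]
    omega

/-- AM-GM: nonnegativity of the Motzkin polynomial. -/
lemma motzkin_nonneg (x : Fin n → ℝ) : 0 ≤ eval x (Motzkin n) := by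
  classical
  set u := ∏ i, x i with hu
  have hxx : (∏ i, (x i)^2) = u^2 := by rw [Finset.prod_pow]
  have heval : eval x (Motzkin n)
      = 1 + (∑ j, u^2 * (x j)^2) - ((n:ℝ)+1) * u^2 := by
    rw [Motzkin, map_sub, map_add, map_one, map_sum]
    congr 1
    · congr 1
      refine Finset.sum_congr rfl fun j _ => ?_
      rw [eval_monomial, Finsupp.prod_fintype _ _ (fun i => pow_zero _), one_mul]
      have h1 : ∀ i : Fin n, (x i)^(expMotz n j i) = (x i)^2 * (if i = j then (x i)^2 else 1) := by
        intro i
        rw [expMotz_apply]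
        split <;> ring
      rw [Finset.prod_congr rfl fun i _ => h1 i, Finset.prod_mul_distrib,
        Finset.prod_ite_eq' univ j (fun i => (x i)^2), if_pos (Finset.mem_univ j), hxx]
    · rw [eval_monomial, Finsupp.prod_fintype _ _ (fun i => pow_zero _)]
      have h2 : ∀ i ∈ (univ : Finset (Fin n)), (x i)^(twoE n i) = (x i)^2 := by
        intro i _
        rw [twoE_apply]
      rw [Finset.prod_congr rfl h2, hxx]
  rw [heval]
  -- AM-GM setup
  set z : Fin (n+1) → ℝ := Fin.cases 1 (fun j => u^2 * (x j)^2) with hz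
  have hznn : ∀ i ∈ univ, (0:ℝ) ≤ z i := by
    intro i _
    refine Fin.cases ?_ ?_ i
    · simp [hz]
    · intro j
      have hzj : z j.succ = u^2 * (x j)^2 := by simp [hz]
      rw [hzj]
      positivity
  have hn1 : (0:ℝ) < (n:ℝ) + 1 := by positivity
  have hw : ∀ i ∈ univ, (0:ℝ) ≤ (fun _ : Fin (n+1) => 1/((n:ℝ)+1)) i := fun i _ => by positivity
  have hw1 : ∑ _i : Fin (n+1), 1/((n:ℝ)+1) = 1 := by
    rw [Finset.sum_const, card_univ, Fintype.card_fin, nsmul_eq_mul]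
    push_cast
    field_simp
  have hgm := Real.geom_mean_le_arith_mean_weighted univ (fun _ => 1/((n:ℝ)+1)) z hw hw1 hznn
  have hprodz : ∏ i : Fin (n+1), z i = (u^2)^(n+1) := by
    rw [Fin.prod_univ_succ]
    simp only [hz, Fin.cases_zero, Fin.cases_succ, one_mul]
    rw [Finset.prod_mul_distrib, Finset.prod_const, card_univ, Fintype.card_fin,
      Finset.prod_pow, ← hu]
    ring
  have hLHS : (∏ i : Fin (n+1), z i ^ (1/((n:ℝ)+1))) = u^2 := by
    rw [Real.finset_prod_rpow univ z hznn, hprodz,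
      ← Real.rpow_natCast ((u:ℝ)^2) (n+1), ← Real.rpow_mul (sq_nonneg u)]
    push_cast
    rw [mul_one_div, div_self (ne_of_gt hn1), Real.rpow_one]
  have hRHS : (∑ i : Fin (n+1), (1/((n:ℝ)+1)) * z i)
      = (1/((n:ℝ)+1)) * (1 + ∑ j : Fin n, u^2 * (x j)^2) := by
    rw [← Finset.mul_sum, Fin.sum_univ_succ]
    simp only [hz, Fin.cases_zero, Fin.cases_succ]
  rw [hLHS, hRHS] at hgm
  have key : ((n:ℝ)+1) * u^2 ≤ 1 + ∑ j : Fin n, u^2 * (x j)^2 := by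
    have h2 := mul_le_mul_of_nonneg_left hgm hn1.le
    rwa [← mul_assoc, mul_one_div, div_self (ne_of_gt hn1), one_mul] at h2
  linarith

def succEquiv (n : ℕ) : Fin n ≃ {x : Fin (n+1) // x ≠ 0} where
  toFun j := ⟨j.succ, Fin.succ_ne_zero j⟩
  invFun x := x.1.pred x.2
  left_inv j := by simp
  right_inv x := by
    ext
    simp

lemma linIndep42 :
    LinearIndependent ℝ (fun j : Fin n => (fun i : Fin n => if i = j then (4:ℝ) else 2)) := by
  rw [Fintype.linearIndependent_iff]
  intro g hsum
  have hcoord : ∀ i : Fin n, 2 * (∑ j, g j) + 2 * g i = 0 := by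
    intro i
    have hthis := congrFun hsum i
    rw [Finset.sum_apply] at hthis
    have heq : ∀ j : Fin n, (g j • (fun i : Fin n => if i = j then (4:ℝ) else 2)) i
        = 2 * g j + (if j = i then 2 * g j else 0) := by
      intro j
      simp only [Pi.smul_apply, smul_eq_mul]
      rcases eq_or_ne i j with h | h
      · rw [if_pos h, if_pos h.symm]; ring
      · rw [if_neg h, if_neg (Ne.symm h)]; ring
    rw [Finset.sum_congr rfl (fun j _ => heq j), Finset.sum_add_distrib,
      Finset.sum_ite_eq' _ i (fun j => 2 * g j), if_pos (Finset.mem_univ i),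
      ← Finset.mul_sum] at hthis
    simpa using hthis
  have hgi : ∀ i, g i = -(∑ j, g j) := fun i => by have := hcoord i; linarith
  have hsumS : (∑ j, g j) = (n:ℝ) * (-(∑ j, g j)) := by
    conv_lhs => rw [Finset.sum_congr rfl (fun i _ => hgi i)]
    rw [Finset.sum_const, card_univ, Fintype.card_fin, nsmul_eq_mul]
  have hS0 : (∑ j, g j) = 0 := by
    have h1 : (1 + (n:ℝ)) * (∑ j, g j) = 0 := by linear_combination hsumS
    have h2 : (0:ℝ) < 1 + (n:ℝ) := by positivity
    rcases mul_eq_zero.1 h1 with h | h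
    · exact absurd h (ne_of_gt h2)
    · exact h
  intro i
  rw [hgi i, hS0, neg_zero]

lemma affineIndepMotz :
    AffineIndependent ℝ (fun j : Fin (n+1) =>
      (fun i : Fin n => (((Fin.cases 0 (expMotz n) j : Fin n →₀ ℕ)) i : ℝ))) := by
  rw [affineIndependent_iff_linearIndependent_vsub ℝ _ 0]
  apply (linearIndependent_equiv (succEquiv n)).1
  have heq : ((fun (i : {x : Fin (n+1) // x ≠ 0}) =>
        (fun i' : Fin n => (((Fin.cases 0 (expMotz n) (i : Fin (n+1)) : Fin n →₀ ℕ)) i' : ℝ))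
          -ᵥ (fun i' : Fin n => (((Fin.cases 0 (expMotz n) (0 : Fin (n+1)) : Fin n →₀ ℕ)) i' : ℝ)))
      ∘ (succEquiv n))
      = (fun j : Fin n => (fun i : Fin n => if i = j then (4:ℝ) else 2)) := by
    funext j
    funext i
    simp only [Function.comp_apply, succEquiv, Equiv.coe_fn_mk, vsub_eq_sub, Pi.sub_apply,
      Fin.cases_succ, Fin.cases_zero, expMotz_apply]
    rw [Finsupp.coe_zero, Pi.zero_apply]
    split <;> norm_num
  rw [heq]
  exact linIndep42

end PartD

noncomputable section PartE

open MvPolynomial Finset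

variable {n t : ℕ}

lemma sum_ite42R (i : Fin n) : (∑ j : Fin n, (((if i = j then 4 else 2 : ℕ)) : ℝ)) = 2*n + 2 := by
  classical
  have h : ∀ j : Fin n, (((if i = j then 4 else 2 : ℕ)) : ℝ) = 2 + (if j = i then 2 else 0) := by
    intro j
    rcases eq_or_ne i j with hh | hh
    · rw [if_pos hh, if_pos hh.symm]; norm_num
    · rw [if_neg hh, if_neg (Ne.symm hh)]; norm_num
  rw [Finset.sum_congr rfl fun j _ => h j, Finset.sum_add_distrib,
    Finset.sum_ite_eq' _ i (fun _ => (2:ℝ)), if_pos (Finset.mem_univ i),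
    Finset.sum_const, card_univ, Fintype.card_fin, nsmul_eq_mul]
  push_cast
  ring

lemma motzkin_isCircuit (hn : 2 ≤ n) : IsCircuit (Motzkin n) := by
  right
  refine ⟨n, le_refl n, fun j => Fin.cases 0 (expMotz n) j, fun _ => 1, twoE n,
    -((n:ℝ)+1), fun _ => 1/((n:ℝ)+1), fun _ => one_pos, ?_, ?_, ?_, ?_, ?_, ?_⟩
  · intro j i
    refine Fin.cases ?_ ?_ j
    · simp
    · intro j'
      simp only [Fin.cases_succ, expMotz_apply]
      split
      · exact ⟨2, rfl⟩
      · exact ⟨1, rfl⟩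
  · exact affineIndepMotz
  · intro j
    positivity
  · rw [Finset.sum_const, card_univ, Fintype.card_fin, nsmul_eq_mul]
    push_cast
    field_simp
  · intro i
    have hL : ((twoE n i : ℕ) : ℝ) = 2 := by rw [twoE_apply]; norm_num
    rw [hL, Fin.sum_univ_succ]
    simp only [Fin.cases_zero, Fin.cases_succ, Finsupp.coe_zero, Pi.zero_apply,
      Nat.cast_zero, mul_zero, zero_add]
    rw [← Finset.mul_sum]
    have hsum : (∑ j : Fin n, ((expMotz n j i : ℕ) : ℝ)) = 2*n+2 := by
      have h : ∀ j : Fin n, ((expMotz n j i : ℕ) : ℝ) = ((if i = j then 4 else 2 : ℕ) : ℝ) := by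
        intro j
        rw [expMotz_apply]
      rw [Finset.sum_congr rfl fun j _ => h j, sum_ite42R]
    rw [hsum]
    have hne : ((n:ℝ)+1) ≠ 0 := by positivity
    field_simp
  · rw [Fin.sum_univ_succ]
    simp only [Fin.cases_zero, Fin.cases_succ]
    rw [monomial_zero', MvPolynomial.C_1]
    have hmono : (monomial (twoE n)) (-((n:ℝ)+1)) = -(monomial (twoE n)) ((n:ℝ)+1) := by
      rw [map_neg]
    rw [hmono, Motzkin]
    ring

lemma motzkin_mem_sonc (hn : 2 ≤ n) : Motzkin n ∈ SONCset n := by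
  refine ⟨1, fun _ => 1, fun _ => Motzkin n, fun _ => zero_le_one,
    fun _ => ⟨motzkin_isCircuit hn, motzkin_nonneg⟩, ?_⟩
  rw [Fin.sum_univ_one, one_smul]

lemma motzkin_mem_hput (hn : 2 ≤ n) (G : Finset (MP n)) (h1 : (1 : MP n) ∈ G) :
    Motzkin n ∈ HPut (SONCset n) G (2*n+2) := by
  refine ⟨1, fun _ => Motzkin n, fun _ => 1, fun _ => motzkin_mem_sonc hn, fun _ => h1,
    fun _ => ?_, ?_⟩
  · rw [mul_one]
    exact motzkin_totalDegree_le
  · rw [Fin.sum_univ_one, mul_one]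

lemma feas_compact [DecidableEq (MP n)] (hn : 1 ≤ n) (ht : 1 ≤ t) :
    IsCompact (feasSet ({1, ggP n t} : Finset (MP n))) := by
  have hset : feasSet ({1, ggP n t} : Finset (MP n))
      = {x : Fin n → ℝ | 0 ≤ ((n:ℝ)+1) - ∑ i, (x i)^(2*t)} := by
    ext x
    simp only [feasSet, Set.mem_setOf_eq]
    constructor
    · intro h
      have h2 := h (ggP n t) (by simp)
      rwa [eval_ggP] at h2
    · intro h g hgmem
      rcases Finset.mem_insert.1 hgmem with h1 | h2
      · rw [h1]
        simp
      · rw [Finset.mem_singleton.1 h2, eval_ggP]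
        exact h
  rw [hset]
  apply IsCompact.of_isClosed_subset
    (isCompact_univ_pi (fun _ : Fin n => isCompact_Icc (a := -((n:ℝ)+1)) (b := (n:ℝ)+1)))
  · have hcont : Continuous fun x : Fin n → ℝ => ((n:ℝ)+1) - ∑ i, (x i)^(2*t) :=
      Continuous.sub continuous_const
        (continuous_finset_sum _ fun i _ => (continuous_apply i).pow _)
    exact isClosed_le continuous_const hcont
  · intro x hx
    rw [Set.mem_setOf_eq] at hx
    rw [Set.mem_univ_pi]
    intro i
    have hterm : ∀ j : Fin n, (0:ℝ) ≤ (x j)^(2*t) := fun j => by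
      rw [pow_mul]
      positivity
    have hle : (x i)^(2*t) ≤ (n:ℝ)+1 := by
      have := Finset.single_le_sum (fun j _ => hterm j) (Finset.mem_univ i)
      linarith
    have habs : |x i| ≤ (n:ℝ)+1 := by
      by_contra hgt
      push_neg at hgt
      have h1 : (1:ℝ) ≤ |x i| := by
        have h0 : (0:ℝ) ≤ (n:ℝ) := Nat.cast_nonneg n
        linarith
      have h2 : |x i| ≤ |x i|^(2*t) := le_self_pow₀ h1 (by omega)
      have h3 : |x i|^(2*t) = (x i)^(2*t) := by
        rw [← abs_pow, abs_of_nonneg (hterm i)]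
      linarith
    rw [Set.mem_Icc]
    exact abs_le.1 habs

lemma cube_sub [DecidableEq (MP n)] (hn : 1 ≤ n) (ht : 1 ≤ t) :
    {x : Fin n → ℝ | ∀ i, x i = -1 ∨ x i = 1}
      ⊆ feasSet ({1, ggP n t} : Finset (MP n)) := by
  intro x hx g hgmem
  rcases Finset.mem_insert.1 hgmem with h1 | h2
  · rw [h1]
    simp
  · rw [Finset.mem_singleton.1 h2, eval_ggP]
    have hone : ∀ i : Fin n, (x i)^(2*t) = 1 := by
      intro i
      rw [pow_mul]
      rcases hx i with h | h <;> rw [h] <;> norm_num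
    rw [Finset.sum_congr rfl fun i _ => hone i, Finset.sum_const, card_univ,
      Fintype.card_fin, nsmul_eq_mul, mul_one]
    linarith [Nat.cast_nonneg (α := ℝ) n]

lemma motzkin_not_hsch [DecidableEq (MP n)] (hn : 2 ≤ n) (ht : 1 ≤ t) :
    Motzkin n ∉ HSch (SOSset n) ({1, ggP n t} : Finset (MP n)) t := by
  rintro ⟨k, s, g, hs, hg, hdeg, hM⟩
  have hn1 : 1 ≤ n := by omega
  have hone_ne : (1 : MP n) ≠ ggP n t := Ne.symm (ggP_ne_one hn1 ht)
  have hterm : ∀ i, s i * g i ∈ SOSset n := by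
    intro i
    obtain ⟨k', cc, ee, hcc, hgi⟩ := hg i
    have hgi' : g i = ∑ m, cc m • (ggP n t) ^ (ee m (ggP n t)) := by
      rw [hgi]
      refine Finset.sum_congr rfl fun m _ => ?_
      congr 1
      rw [Finset.prod_pair hone_ne, one_pow, one_mul]
    by_cases hs0 : s i = 0
    · rw [hs0, zero_mul]
      exact sos_zero
    by_cases hg0 : g i = 0
    · rw [hg0, mul_zero]
      exact sos_zero
    have hdg : (g i).totalDegree ≤ t := le_trans (totalDegree_le_mul hs0 hg0) (hdeg i)
    obtain ⟨c, hc0, hcC⟩ := preprime_comb_const hn1 ht cc (fun m => ee m (ggP n t)) hcc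
      (by rw [← hgi']; exact hdg)
    rw [hgi', hcC, mul_comm]
    exact sos_smulC c hc0 (hs i)
  have hsos : Motzkin n ∈ SOSset n := by
    rw [hM]
    exact Finset.sum_induction _ (· ∈ SOSset n) (fun a b ha hb => sos_add ha hb) sos_zero
      (fun i _ => hterm i)
  obtain ⟨K, p, hp⟩ := hsos
  exact motzkin_ne_sos hn p hp

end PartE

/-- For every `n ≥ 2` and `t ≥ n+1` there is a constraint set `𝒢`
(containing `g₀ = 1`, all other constraints of degree `≥ t+1`, with compact
feasibility set containing `{−1,1}ⁿ`) such that `M_n` lies in the degree-`(2n+2)`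
Putinar-type SONC hierarchy but not in the degree-`t` Schmüdgen-type SOS hierarchy;
in particular `H(𝕊𝕆ℕℂ,𝒢,2n+2) ⊄ H*(𝕊𝕆𝕊,𝒢,t)`. -/
theorem sonc_not_contained_in_sos (n t : ℕ) (hn : 2 ≤ n) (ht : n + 1 ≤ t) :
    ∃ G : Finset (MvPolynomial (Fin n) ℝ),
      (1 : MvPolynomial (Fin n) ℝ) ∈ G ∧
      (∀ g ∈ G, g ≠ 1 → t + 1 ≤ g.totalDegree) ∧
      IsCompact (feasSet G) ∧
      {x : Fin n → ℝ | ∀ i, x i = -1 ∨ x i = 1} ⊆ feasSet G ∧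
      Motzkin n ∈ HPut (SONCset n) G (2 * n + 2) ∧
      Motzkin n ∉ HSch (SOSset n) G t ∧
      ¬ HPut (SONCset n) G (2 * n + 2) ⊆ HSch (SOSset n) G t := by
  classical
  have hn1 : 1 ≤ n := by omega
  have ht1 : 1 ≤ t := by omega
  refine ⟨{1, ggP n t}, Finset.mem_insert_self _ _, ?_, feas_compact hn1 ht1,
    cube_sub hn1 ht1, motzkin_mem_hput hn _ (Finset.mem_insert_self _ _),
    motzkin_not_hsch hn ht1, ?_⟩
  · intro g hg hne
    rcases Finset.mem_insert.1 hg with h | h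
    · exact absurd h hne
    · rw [Finset.mem_singleton.1 h]
      have := le_totalDegree_ggP hn1 ht1
      omega
  · intro hsub
    exact motzkin_not_hsch hn ht1
      (hsub (motzkin_mem_hput hn _ (Finset.mem_insert_self _ _)))
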